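/- Let ψ : ℝ → ℝ be measurable with ψ(-x) = ψ(x) for all x. For the unbalanced step-reinforced random walk (X_n), one has E[ψ(X_k)] = E[ψ(ξ_1)] for every integer k ≥ 1. -/

import Mathlib

open MeasureTheory ProbabilityTheory Filter Real Topology
open scoped ENNReal NNReal

/-- The unbalanced step-reinforced random walk with parameters `(p, α)`:
`X 1 = ξ 1` and `X (n+1) = γ n * ρ n * X (U n) + (1 - γ n) * ξ (n+1)`, where the
`ξ` are i.i.d., `γ n` is Bernoulli(α), `ρ n` is ±1-valued with `P(ρ n = 1) = p`,
`U n` is uniform on `{1, …, n}`, and all these basic variables are mutually independent. -/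
structure URW (Ω : Type*) [MeasureSpace Ω] (p α : ℝ) where
  ξ : ℕ → Ω → ℝ
  γ : ℕ → Ω → ℝ
  ρ : ℕ → Ω → ℝ
  U : ℕ → Ω → ℕ
  X : ℕ → Ω → ℝ
  hprob : IsProbabilityMeasure (ℙ : Measure Ω)
  hp : p ∈ Set.Icc (0:ℝ) 1
  hα : α ∈ Set.Icc (0:ℝ) 1
  meas_ξ : ∀ n, Measurable (ξ n)
  meas_γ : ∀ n, Measurable (γ n)
  meas_ρ : ∀ n, Measurable (ρ n)
  meas_U : ∀ n, Measurable (U n)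
  meas_X : ∀ n, Measurable (X n)
  ident_ξ : ∀ n ≥ 1, IdentDistrib (ξ n) (ξ 1) ℙ ℙ
  lawγ1 : ∀ n ≥ 1, (ℙ : Measure Ω) (γ n ⁻¹' {1}) = ENNReal.ofReal α
  lawγ0 : ∀ n ≥ 1, (ℙ : Measure Ω) (γ n ⁻¹' {0}) = ENNReal.ofReal (1 - α)
  lawρ1 : ∀ n ≥ 1, (ℙ : Measure Ω) (ρ n ⁻¹' {1}) = ENNReal.ofReal p
  lawρm1 : ∀ n ≥ 1, (ℙ : Measure Ω) (ρ n ⁻¹' {-1}) = ENNReal.ofReal (1 - p)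
  rangeU : ∀ n ≥ 1, ∀ ω, U n ω ∈ Finset.Icc 1 n
  lawU : ∀ n ≥ 1, ∀ k ∈ Finset.Icc 1 n, (ℙ : Measure Ω) (U n ⁻¹' {k}) = (n : ℝ≥0∞)⁻¹
  indep : iIndepFun
    (fun (i : ℕ × Fin 4) => ![ξ i.1, γ i.1, ρ i.1, fun ω => (U i.1 ω : ℝ)] i.2) ℙ
  hX1 : ∀ ω, X 1 ω = ξ 1 ω
  hXrec : ∀ n ≥ 1, ∀ ω, X (n+1) ω = γ n ω * ρ n ω * X (U n ω) ω + (1 - γ n ω) * ξ (n+1) ω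

namespace URW

variable {Ω : Type*} [MeasureSpace Ω] {p α : ℝ}

/-- Position of the walker: `T n = X 1 + ⋯ + X n`. -/
def T (W : URW Ω p α) (n : ℕ) (ω : Ω) : ℝ := ∑ k ∈ Finset.Icc 1 n, W.X k ω

/-- First moment of a step. -/
noncomputable def μ₁ (W : URW Ω p α) : ℝ := ∫ ω, W.ξ 1 ω

/-- Second moment of a step. -/
noncomputable def μ₂ (W : URW Ω p α) : ℝ := ∫ ω, (W.ξ 1 ω)^2

end URW

/-- `aseq a n = ∏_{k=1}^{n-1} (1 + a/k)⁻¹`, the martingale normalizing sequence. -/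
noncomputable def aseq (a : ℝ) (n : ℕ) : ℝ := ∏ k ∈ Finset.Icc 1 (n-1), (1 + a / k)⁻¹


namespace URWaux

open MeasureTheory ProbabilityTheory
open scoped ENNReal

variable {Ω : Type*} [MeasureSpace Ω] {p α : ℝ}

/-- The family of basic random variables. -/
noncomputable def fam (W : URW Ω p α) : ℕ × Fin 4 → Ω → ℝ :=
  fun i => ![W.ξ i.1, W.γ i.1, W.ρ i.1, fun ω => (W.U i.1 ω : ℝ)] i.2

lemma fam0 (W : URW Ω p α) (n : ℕ) : fam W (n, 0) = W.ξ n := rfl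
lemma fam1 (W : URW Ω p α) (n : ℕ) : fam W (n, 1) = W.γ n := rfl
lemma fam2 (W : URW Ω p α) (n : ℕ) : fam W (n, 2) = W.ρ n := rfl
lemma fam3 (W : URW Ω p α) (n : ℕ) : fam W (n, 3) = fun ω => (W.U n ω : ℝ) := rfl

lemma meas_fam (W : URW Ω p α) (i : ℕ × Fin 4) : Measurable (fam W i) := by
  obtain ⟨n, j⟩ := i
  fin_cases j
  · exact W.meas_ξ n
  · exact W.meas_γ n
  · exact W.meas_ρ n
  · exact (measurable_from_top : Measurable (fun m : ℕ => (m:ℝ))).comp (W.meas_U n)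

lemma indep_fam (W : URW Ω p α) :
    iIndepFun (fam W) ℙ := W.indep

/-- Index set of the basic variables that `X k` depends on. -/
def idxSet (k : ℕ) : Set (ℕ × Fin 4) := {i | i.1 < k ∨ i = (k, 0)}

/-- σ-algebra generated by the basic variables that `X k` depends on. -/
noncomputable def G (W : URW Ω p α) (k : ℕ) : MeasurableSpace Ω :=
  ⨆ i ∈ idxSet k, MeasurableSpace.comap (fam W i) inferInstance

/-- σ-algebra generated by `γ n, ρ n, U n`. -/
noncomputable def H (W : URW Ω p α) (n : ℕ) : MeasurableSpace Ω :=
  ⨆ i ∈ ({(n,1), (n,2), (n,3)} : Set (ℕ × Fin 4)), MeasurableSpace.comap (fam W i) inferInstance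

lemma fam_measG (W : URW Ω p α) {k : ℕ} {i : ℕ × Fin 4} (hi : i ∈ idxSet k) :
    Measurable[G W k] (fam W i) := by
  refine Measurable.mono (Measurable.of_comap_le le_rfl) ?_ le_rfl
  exact le_iSup₂ (f := fun i (_ : i ∈ idxSet k) =>
    MeasurableSpace.comap (fam W i) inferInstance) i hi

lemma G_mono (W : URW Ω p α) {k l : ℕ} (h : k ≤ l) : G W k ≤ G W l := by
  refine iSup₂_le fun i hi => le_iSup₂ (f := fun i (_ : i ∈ idxSet l) =>
    MeasurableSpace.comap (fam W i) inferInstance) i ?_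
  rcases hi with hi | rfl
  · exact Or.inl (lt_of_lt_of_le hi h)
  · rcases eq_or_lt_of_le h with rfl | h
    · exact Or.inr rfl
    · exact Or.inl h

lemma measG (W : URW Ω p α) : ∀ k, 1 ≤ k → Measurable[G W k] (W.X k) := by
  have key : ∀ k, ∀ m, 1 ≤ m → m ≤ k → Measurable[G W k] (W.X m) := by
    intro k
    induction k with
    | zero => intro m h1 h2; omega
    | succ k ih =>
      intro m h1 h2
      rcases Nat.lt_or_ge m (k+1) with hm | hm
      · exact (ih m h1 (by omega)).mono (G_mono W (by omega)) le_rfl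
      · have hmk : m = k + 1 := by omega
        subst hmk
        rcases Nat.eq_zero_or_pos k with rfl | hk
        · -- X 1 = ξ 1
          have : W.X 1 = fam W (1, 0) := by funext ω; rw [W.hX1 ω]; rfl
          rw [this]
          exact fam_measG W (Or.inr rfl)
        · -- recursive case
          have hrw : W.X (k+1) = fun ω =>
              fam W (k,1) ω * fam W (k,2) ω *
                (∑ j ∈ Finset.Icc 1 k, if fam W (k,3) ω = (j:ℝ) then W.X j ω else 0)
              + (1 - fam W (k,1) ω) * fam W (k+1,0) ω := by
            funext ω
            rw [W.hXrec k hk ω]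
            congr 1
            congr 1
            rw [fam3]
            have hU := W.rangeU k hk ω
            rw [Finset.sum_eq_single_of_mem (W.U k ω) hU]
            · simp
            · intro j hj hne
              rw [if_neg]
              exact fun h => hne (Nat.cast_inj.mp h).symm
          rw [hrw]
          have h1m : Measurable[G W (k+1)] (fam W (k,1)) := fam_measG W (Or.inl (by omega))
          have h2m : Measurable[G W (k+1)] (fam W (k,2)) := fam_measG W (Or.inl (by omega))
          have h3m : Measurable[G W (k+1)] (fam W (k,3)) := fam_measG W (Or.inl (by omega))
          have h0m : Measurable[G W (k+1)] (fam W (k+1,0)) := fam_measG W (Or.inr rfl)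
          refine Measurable.add (Measurable.mul (h1m.mul h2m) ?_)
            ((measurable_const.sub h1m).mul h0m)
          refine Finset.measurable_sum _ fun j hj => ?_
          refine Measurable.ite ?_ ((ih j (Finset.mem_Icc.1 hj).1 (Finset.mem_Icc.1 hj).2).mono (G_mono W (Nat.le_succ k)) le_rfl) measurable_const
          exact h3m (measurableSet_singleton _)
  intro k hk; exact key k k hk le_rfl

lemma indepGH (W : URW Ω p α) {k n : ℕ} (hkn : k ≤ n) : Indep (G W k) (H W n) ℙ := by
  refine indep_iSup_of_disjoint (fun i => (meas_fam W i).comap_le) (indep_fam W).iIndep ?_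
  rw [Set.disjoint_left]
  rintro i hi (rfl | rfl | rfl)
  · rcases hi with hi | hi
    · exact absurd hi (by omega)
    · exact absurd (congrArg Prod.snd hi) (by simp)
  · rcases hi with hi | hi
    · exact absurd hi (by omega)
    · exact absurd (congrArg Prod.snd hi) (by simp)
  · rcases hi with hi | hi
    · exact absurd hi (by omega)
    · exact absurd (congrArg Prod.snd hi) (by simp)

end URWaux
namespace URWaux

variable {Ω : Type*} [MeasureSpace Ω] {p α : ℝ}

lemma U_preimage (W : URW Ω p α) (n m : ℕ) :
    W.U n ⁻¹' {m} = fam W (n,3) ⁻¹' {(m : ℝ)} := by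
  ext ω; simp [fam3, Nat.cast_inj]

lemma integral_indicator_piece (W : URW Ω p α) {m n : ℕ} (hm1 : 1 ≤ m) (hmn : m ≤ n)
    (ψ : ℝ → ℝ) (hψmeas : Measurable ψ) (hintm : Integrable (fun ω => ψ (W.X m ω)) ℙ)
    (s : ℝ) :
    ∫ ω, ((W.γ n ⁻¹' {1}) ∩ (W.ρ n ⁻¹' {s}) ∩ (W.U n ⁻¹' {m})).indicator
        (fun ω => ψ (W.X m ω)) ω
      = (ℙ ((W.γ n ⁻¹' {1}) ∩ (W.ρ n ⁻¹' {s}) ∩ (W.U n ⁻¹' {m}))).toReal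
        * ∫ ω, ψ (W.X m ω) := by
  haveI := W.hprob
  set E := (W.γ n ⁻¹' {1}) ∩ (W.ρ n ⁻¹' {s}) ∩ (W.U n ⁻¹' {m}) with hEdef
  have hEmeas : MeasurableSet E :=
    (((W.meas_γ n) (measurableSet_singleton _)).inter
      ((W.meas_ρ n) (measurableSet_singleton _))).inter
      ((W.meas_U n) (measurableSet_singleton _))
  have hE : MeasurableSet[H W n] E := by
    have h1 : MeasurableSet[H W n] (W.γ n ⁻¹' {1}) := by
      have : MeasurableSet[MeasurableSpace.comap (fam W (n,1)) inferInstance]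
          (W.γ n ⁻¹' {1}) := ⟨{1}, measurableSet_singleton _, by rw [fam1]⟩
      exact (le_iSup₂ (f := fun i (_ : i ∈ ({(n,1), (n,2), (n,3)} : Set (ℕ × Fin 4))) =>
        MeasurableSpace.comap (fam W i) inferInstance) (n,1) (by simp)) _ this
    have h2 : MeasurableSet[H W n] (W.ρ n ⁻¹' {s}) := by
      have : MeasurableSet[MeasurableSpace.comap (fam W (n,2)) inferInstance]
          (W.ρ n ⁻¹' {s}) := ⟨{s}, measurableSet_singleton _, by rw [fam2]⟩
      exact (le_iSup₂ (f := fun i (_ : i ∈ ({(n,1), (n,2), (n,3)} : Set (ℕ × Fin 4))) =>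
        MeasurableSpace.comap (fam W i) inferInstance) (n,2) (by simp)) _ this
    have h3 : MeasurableSet[H W n] (W.U n ⁻¹' {m}) := by
      have : MeasurableSet[MeasurableSpace.comap (fam W (n,3)) inferInstance]
          (W.U n ⁻¹' {m}) := ⟨{(m:ℝ)}, measurableSet_singleton _, (U_preimage W n m).symm⟩
      exact (le_iSup₂ (f := fun i (_ : i ∈ ({(n,1), (n,2), (n,3)} : Set (ℕ × Fin 4))) =>
        MeasurableSpace.comap (fam W i) inferInstance) (n,3) (by simp)) _ this
    exact (h1.inter h2).inter h3
  have hf : Measurable[G W m] fun ω => ψ (W.X m ω) := hψmeas.comp (measG W m hm1)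
  have hg : Measurable[H W n] (E.indicator (fun _ => (1:ℝ))) :=
    measurable_const.indicator hE
  have hIF : IndepFun (fun ω => ψ (W.X m ω)) (E.indicator (fun _ => (1:ℝ))) ℙ :=
    indep_of_indep_of_le_left (indep_of_indep_of_le_right (indepGH W hmn) hg.comap_le)
      hf.comap_le
  have hgint : Integrable (E.indicator (fun _ => (1:ℝ))) ℙ :=
    (integrable_const (1:ℝ)).indicator hEmeas
  have hmul := hIF.integral_mul_eq_mul_integral hintm.aestronglyMeasurable hgint.aestronglyMeasurable
  have hlhs : ((fun ω => ψ (W.X m ω)) * E.indicator (fun _ => (1:ℝ)))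
      = E.indicator (fun ω => ψ (W.X m ω)) := by
    funext ω; by_cases hω : ω ∈ E <;>
      simp [Set.indicator_of_mem, Set.indicator_of_notMem, hω]
  rw [hlhs] at hmul
  have hone : integral ℙ (E.indicator (fun _ : Ω => (1:ℝ))) = (ℙ E).toReal :=
    integral_indicator_one hEmeas
  rw [hmul, hone, mul_comm]

lemma integral_indicator_xi (W : URW Ω p α) {n : ℕ} (hn : 1 ≤ n) (ψ : ℝ → ℝ)
    (hψmeas : Measurable ψ) (hintξ : Integrable (fun ω => ψ (W.ξ (n+1) ω)) ℙ) :
    ∫ ω, ((W.γ n ⁻¹' {0})).indicator (fun ω => ψ (W.ξ (n+1) ω)) ω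
      = (ℙ (W.γ n ⁻¹' {0})).toReal * ∫ ω, ψ (W.ξ (n+1) ω) := by
  haveI := W.hprob
  have hBmeas : MeasurableSet (W.γ n ⁻¹' {0}) := (W.meas_γ n) (measurableSet_singleton _)
  have hpair : IndepFun (fam W (n+1,0)) (fam W (n,1)) ℙ :=
    (indep_fam W).indepFun (by simp)
  have hIF : IndepFun (fun ω => ψ (W.ξ (n+1) ω))
      (fun ω => ({(0:ℝ)} : Set ℝ).indicator (fun _ => (1:ℝ)) (W.γ n ω)) ℙ := by
    have hindmeas : Measurable (({(0:ℝ)} : Set ℝ).indicator (fun _ => (1:ℝ))) :=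
      (measurable_const : Measurable (fun _ : ℝ => (1:ℝ))).indicator
        (measurableSet_singleton (0:ℝ))
    have := hpair.comp hψmeas hindmeas
    rw [fam0, fam1] at this
    exact this
  have hrwind : (fun ω => ({(0:ℝ)} : Set ℝ).indicator (fun _ => (1:ℝ)) (W.γ n ω))
      = (W.γ n ⁻¹' {0}).indicator (fun _ => (1:ℝ)) := by
    funext ω
    by_cases hω : W.γ n ω = 0
    · rw [Set.indicator_of_mem (by simpa using hω), Set.indicator_of_mem (by simpa using hω)]
    · rw [Set.indicator_of_notMem (by simpa using hω), Set.indicator_of_notMem (by simpa using hω)]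
  have hgint : Integrable (fun ω => ({(0:ℝ)} : Set ℝ).indicator (fun _ => (1:ℝ)) (W.γ n ω)) ℙ := by
    rw [hrwind]
    exact (integrable_const (1:ℝ)).indicator hBmeas
  have hmul := hIF.integral_mul_eq_mul_integral hintξ.aestronglyMeasurable hgint.aestronglyMeasurable
  have hlhs : ((fun ω => ψ (W.ξ (n+1) ω)) * (fun ω => ({(0:ℝ)} : Set ℝ).indicator (fun _ => (1:ℝ)) (W.γ n ω)))
      = (W.γ n ⁻¹' {0}).indicator (fun ω => ψ (W.ξ (n+1) ω)) := by
    funext ω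
    by_cases hω : W.γ n ω = 0
    · rw [Pi.mul_apply, Set.indicator_of_mem (by simpa using hω),
        Set.indicator_of_mem (by simpa using hω), mul_one]
    · rw [Pi.mul_apply, Set.indicator_of_notMem (by simpa using hω),
        Set.indicator_of_notMem (by simpa using hω), mul_zero]
  rw [hlhs] at hmul
  have hr : (∫ ω, ({(0:ℝ)} : Set ℝ).indicator (fun _ => (1:ℝ)) (W.γ n ω))
      = (ℙ (W.γ n ⁻¹' {0})).toReal := by
    rw [show (fun ω => ({(0:ℝ)} : Set ℝ).indicator (fun _ => (1:ℝ)) (W.γ n ω))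
        = (W.γ n ⁻¹' {0}).indicator (fun _ => (1:ℝ)) from hrwind]
    exact integral_indicator_one hBmeas
  rw [hmul, hr, mul_comm]

lemma meas_piece (W : URW Ω p α) {m n : ℕ} (s : ℝ) :
    ℙ ((W.γ n ⁻¹' {1}) ∩ (W.ρ n ⁻¹' {s}) ∩ (W.U n ⁻¹' {m}))
      = ℙ (W.γ n ⁻¹' {1}) * ℙ (W.ρ n ⁻¹' {s}) * ℙ (W.U n ⁻¹' {m}) := by
  classical
  set sets : ℕ × Fin 4 → Set Ω := fun i =>
    if i.2 = 1 then fam W (i.1, 1) ⁻¹' {1}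
    else if i.2 = 2 then fam W (i.1, 2) ⁻¹' {s}
    else fam W (i.1, 3) ⁻¹' {(m:ℝ)} with hsets
  have hmeas : ∀ i ∈ ({(n,1), (n,2), (n,3)} : Finset (ℕ × Fin 4)),
      MeasurableSet[MeasurableSpace.comap (fam W i) inferInstance] (sets i) := by
    intro i hi
    simp only [Finset.mem_insert, Finset.mem_singleton] at hi
    rcases hi with rfl | rfl | rfl
    · exact ⟨{1}, measurableSet_singleton _, by simp [hsets]⟩
    · exact ⟨{s}, measurableSet_singleton _, by simp [hsets]⟩
    · exact ⟨{(m:ℝ)}, measurableSet_singleton _, by simp [hsets]⟩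
  have := (indep_fam W).meas_biInter (S := ({(n,1), (n,2), (n,3)} : Finset (ℕ × Fin 4))) hmeas
  have hne12 : ((n,1) : ℕ × Fin 4) ≠ (n,2) := by simp
  have hne13 : ((n,1) : ℕ × Fin 4) ≠ (n,3) := by simp
  have hne23 : ((n,2) : ℕ × Fin 4) ≠ (n,3) := by simp
  rw [Finset.set_biInter_insert, Finset.set_biInter_insert, Finset.set_biInter_singleton] at this
  rw [Finset.prod_insert (by simp), Finset.prod_insert (by simp),
    Finset.prod_singleton] at this
  have h1 : sets (n,1) = W.γ n ⁻¹' {1} := by simp [hsets, fam1]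
  have h2 : sets (n,2) = W.ρ n ⁻¹' {s} := by simp [hsets, fam2]
  have h3 : sets (n,3) = W.U n ⁻¹' {m} := by simp [hsets, (U_preimage W n m)]
  rw [h1, h2, h3] at this
  rw [Set.inter_assoc, this, mul_assoc]

end URWaux
namespace URWaux

variable {Ω : Type*} [MeasureSpace Ω] {p α : ℝ}

lemma step (W : URW Ω p α) (ψ : ℝ → ℝ) (hψmeas : Measurable ψ)
    (hψeven : ∀ x : ℝ, ψ (-x) = ψ x)
    (hint : Integrable (fun ω => ψ (W.ξ 1 ω)) ℙ) {N : ℕ} (hN : 1 ≤ N)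
    (IH : ∀ m, 1 ≤ m → m ≤ N → Integrable (fun ω => ψ (W.X m ω)) ℙ ∧
      ∫ ω, ψ (W.X m ω) = ∫ ω, ψ (W.ξ 1 ω)) :
    Integrable (fun ω => ψ (W.X (N+1) ω)) ℙ ∧
      ∫ ω, ψ (W.X (N+1) ω) = ∫ ω, ψ (W.ξ 1 ω) := by
  haveI := W.hprob
  have hα0 : (0:ℝ) ≤ α := W.hα.1
  have hα1 : α ≤ 1 := W.hα.2
  have hp0 : (0:ℝ) ≤ p := W.hp.1
  have hp1 : p ≤ 1 := W.hp.2
  set A := W.γ N ⁻¹' {1} with hAdef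
  set B := W.γ N ⁻¹' {0} with hBdef
  have hAmeas : MeasurableSet A := (W.meas_γ N) (measurableSet_singleton _)
  have hBmeas : MeasurableSet B := (W.meas_γ N) (measurableSet_singleton _)
  have hEmeas : ∀ (s : ℝ) (m : ℕ), MeasurableSet ((A ∩ W.ρ N ⁻¹' {s}) ∩ W.U N ⁻¹' {m}) :=
    fun s m => ((hAmeas.inter ((W.meas_ρ N) (measurableSet_singleton _))).inter
      ((W.meas_U N) (measurableSet_singleton _)))
  -- identical distribution of ξ (N+1)
  have hid : IdentDistrib (fun ω => ψ (W.ξ (N+1) ω)) (fun ω => ψ (W.ξ 1 ω)) ℙ ℙ :=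
    (W.ident_ξ (N+1) (by omega)).comp hψmeas
  have hintξ : Integrable (fun ω => ψ (W.ξ (N+1) ω)) ℙ := hid.integrable_iff.mpr hint
  -- the comparison function
  set F : Ω → ℝ := fun ω => B.indicator (fun ω => ψ (W.ξ (N+1) ω)) ω +
      ∑ m ∈ Finset.Icc 1 N, ∑ s ∈ ({1, -1} : Finset ℝ),
        ((A ∩ W.ρ N ⁻¹' {s}) ∩ W.U N ⁻¹' {m}).indicator (fun ω => ψ (W.X m ω)) ω
    with hFdef
  -- the good set
  set Ggood := (A ∪ B) ∩ (W.ρ N ⁻¹' {1} ∪ W.ρ N ⁻¹' {-1}) with hGdef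
  have hnull : ℙ Ggoodᶜ = 0 := by
    rw [hGdef, Set.compl_inter]
    refine measure_union_null ?_ ?_
    · have hAB : ℙ (A ∪ B) = 1 := by
        rw [measure_union (by
          rw [Set.disjoint_left]; intro ω h1 h0
          rw [hAdef, Set.mem_preimage, Set.mem_singleton_iff] at h1
          rw [hBdef, Set.mem_preimage, Set.mem_singleton_iff] at h0
          exact one_ne_zero (h1.symm.trans h0)) hBmeas,
          W.lawγ1 N hN, W.lawγ0 N hN, ← ENNReal.ofReal_add hα0 (by linarith)]
        norm_num
      rw [measure_compl (hAmeas.union hBmeas) (measure_ne_top _ _), hAB]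
      simp
    · have hR : ℙ (W.ρ N ⁻¹' {1} ∪ W.ρ N ⁻¹' {-1}) = 1 := by
        rw [measure_union (by
          rw [Set.disjoint_left]; intro ω h1 h0
          rw [Set.mem_preimage, Set.mem_singleton_iff] at h1 h0
          norm_num [h1] at h0) ((W.meas_ρ N) (measurableSet_singleton _)),
          W.lawρ1 N hN, W.lawρm1 N hN, ← ENNReal.ofReal_add hp0 (by linarith)]
        norm_num
      rw [measure_compl (((W.meas_ρ N) (measurableSet_singleton _)).union
        ((W.meas_ρ N) (measurableSet_singleton _))) (measure_ne_top _ _), hR]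
      simp
  -- pointwise identity on the good set
  have hpt : ∀ ω ∈ Ggood, ψ (W.X (N+1) ω) = F ω := by
    rintro ω ⟨hγ, hρ⟩
    rcases hγ with hγ1 | hγ0
    · -- γ = 1 case
      rw [hAdef, Set.mem_preimage, Set.mem_singleton_iff] at hγ1
      set m0 := W.U N ω with hm0def
      have hm0 : m0 ∈ Finset.Icc 1 N := W.rangeU N hN ω
      have hX : W.X (N+1) ω = W.ρ N ω * W.X m0 ω := by
        rw [W.hXrec N hN ω, hγ1]; ring
      have hB0 : B.indicator (fun ω => ψ (W.ξ (N+1) ω)) ω = 0 := by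
        refine Set.indicator_of_notMem ?_ _
        rw [hBdef, Set.mem_preimage, Set.mem_singleton_iff]
        rw [hγ1]; norm_num
      have hsum : (∑ m ∈ Finset.Icc 1 N, ∑ s ∈ ({1, -1} : Finset ℝ),
          ((A ∩ W.ρ N ⁻¹' {s}) ∩ W.U N ⁻¹' {m}).indicator (fun ω => ψ (W.X m ω)) ω)
          = ψ (W.X m0 ω) * 1 := by
        rw [Finset.sum_eq_single_of_mem m0 hm0 (by
          intro m hm hne
          refine Finset.sum_eq_zero fun s hs => Set.indicator_of_notMem ?_ _
          rintro ⟨-, hU⟩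
          rw [Set.mem_preimage, Set.mem_singleton_iff] at hU
          exact hne (hU ▸ rfl))]
        rw [Finset.sum_pair (by norm_num : (1:ℝ) ≠ -1)]
        rcases hρ with hρ1 | hρm
        · rw [Set.mem_preimage, Set.mem_singleton_iff] at hρ1
          rw [Set.indicator_of_mem (show ω ∈ (A ∩ W.ρ N ⁻¹' {1}) ∩ W.U N ⁻¹' {m0} from
              ⟨⟨by simp [hAdef, hγ1], by simp [hρ1]⟩, by simp [hm0def]⟩)
              (fun ω => ψ (W.X m0 ω)),
            Set.indicator_of_notMem (show ω ∉ (A ∩ W.ρ N ⁻¹' {-1}) ∩ W.U N ⁻¹' {m0} from by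
              rintro ⟨⟨-, hs⟩, -⟩
              rw [Set.mem_preimage, Set.mem_singleton_iff] at hs
              norm_num [hρ1] at hs) (fun ω => ψ (W.X m0 ω))]
          ring
        · rw [Set.mem_preimage, Set.mem_singleton_iff] at hρm
          rw [Set.indicator_of_mem (show ω ∈ (A ∩ W.ρ N ⁻¹' {-1}) ∩ W.U N ⁻¹' {m0} from
              ⟨⟨by simp [hAdef, hγ1], by simp [hρm]⟩, by simp [hm0def]⟩)
              (fun ω => ψ (W.X m0 ω)),
            Set.indicator_of_notMem (show ω ∉ (A ∩ W.ρ N ⁻¹' {1}) ∩ W.U N ⁻¹' {m0} from by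
              rintro ⟨⟨-, hs⟩, -⟩
              rw [Set.mem_preimage, Set.mem_singleton_iff] at hs
              norm_num [hρm] at hs) (fun ω => ψ (W.X m0 ω))]
          ring
      have hψX : ψ (W.X (N+1) ω) = ψ (W.X m0 ω) := by
        rcases hρ with hρ1 | hρm
        · rw [Set.mem_preimage, Set.mem_singleton_iff] at hρ1
          rw [hX, hρ1, one_mul]
        · rw [Set.mem_preimage, Set.mem_singleton_iff] at hρm
          rw [hX, hρm, neg_one_mul, hψeven]
      rw [hψX, hFdef]
      simp only []
      rw [hB0, hsum]
      ring
    · -- γ = 0 case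
      rw [hBdef, Set.mem_preimage, Set.mem_singleton_iff] at hγ0
      have hX : W.X (N+1) ω = W.ξ (N+1) ω := by
        rw [W.hXrec N hN ω, hγ0]; ring
      have hBv : B.indicator (fun ω => ψ (W.ξ (N+1) ω)) ω = ψ (W.ξ (N+1) ω) :=
        Set.indicator_of_mem (by rw [hBdef, Set.mem_preimage, Set.mem_singleton_iff]; exact hγ0) _
      have hsum : (∑ m ∈ Finset.Icc 1 N, ∑ s ∈ ({1, -1} : Finset ℝ),
          ((A ∩ W.ρ N ⁻¹' {s}) ∩ W.U N ⁻¹' {m}).indicator (fun ω => ψ (W.X m ω)) ω) = 0 := by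
        refine Finset.sum_eq_zero fun m hm => Finset.sum_eq_zero fun s hs =>
          Set.indicator_of_notMem ?_ _
        rintro ⟨⟨h1, -⟩, -⟩
        rw [hAdef, Set.mem_preimage, Set.mem_singleton_iff] at h1
        exact one_ne_zero (h1.symm.trans hγ0)
      rw [hX, hFdef]
      simp only []
      rw [hBv, hsum, add_zero]
  have hae : (fun ω => ψ (W.X (N+1) ω)) =ᵐ[ℙ] F := by
    rw [Filter.EventuallyEq, ae_iff]
    refine measure_mono_null ?_ hnull
    intro ω hω
    exact fun hmem => hω (hpt ω hmem)
  -- integrability of F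
  have hFint : Integrable F ℙ := by
    refine Integrable.add (hintξ.indicator hBmeas) ?_
    refine integrable_finset_sum _ fun m hm => integrable_finset_sum _ fun s hs => ?_
    exact ((IH m (Finset.mem_Icc.1 hm).1 (Finset.mem_Icc.1 hm).2).1).indicator (hEmeas s m)
  refine ⟨hFint.congr hae.symm, ?_⟩
  rw [integral_congr_ae hae]
  -- compute the integral of F
  rw [hFdef]
  rw [integral_add (hintξ.indicator hBmeas) (by
    refine integrable_finset_sum _ fun m hm => integrable_finset_sum _ fun s hs => ?_
    exact ((IH m (Finset.mem_Icc.1 hm).1 (Finset.mem_Icc.1 hm).2).1).indicator (hEmeas s m))]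
  rw [integral_finset_sum _ (fun m hm => integrable_finset_sum _ fun s hs =>
    ((IH m (Finset.mem_Icc.1 hm).1 (Finset.mem_Icc.1 hm).2).1).indicator (hEmeas s m))]
  have hterm : ∀ m ∈ Finset.Icc 1 N,
      (∫ ω, ∑ s ∈ ({1, -1} : Finset ℝ),
        ((A ∩ W.ρ N ⁻¹' {s}) ∩ W.U N ⁻¹' {m}).indicator (fun ω => ψ (W.X m ω)) ω)
      = (α * p * (N:ℝ)⁻¹ + α * (1-p) * (N:ℝ)⁻¹) * ∫ ω, ψ (W.ξ 1 ω) := by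
    intro m hm
    obtain ⟨hm1, hmN⟩ := Finset.mem_Icc.1 hm
    obtain ⟨hintm, hvalm⟩ := IH m hm1 hmN
    rw [integral_finset_sum _ (fun s hs => hintm.indicator (hEmeas s m))]
    rw [Finset.sum_pair (by norm_num : (1:ℝ) ≠ -1)]
    have e1 := integral_indicator_piece W hm1 hmN ψ hψmeas hintm 1
    have e2 := integral_indicator_piece W hm1 hmN ψ hψmeas hintm (-1)
    rw [Set.inter_assoc] at e1 e2
    rw [hAdef, Set.inter_assoc, Set.inter_assoc, e1, e2, hvalm]
    have q1 : (ℙ (W.γ N ⁻¹' {1} ∩ (W.ρ N ⁻¹' {1} ∩ W.U N ⁻¹' {m}))).toReal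
        = α * p * (N:ℝ)⁻¹ := by
      rw [← Set.inter_assoc, meas_piece W 1, W.lawγ1 N hN, W.lawρ1 N hN, W.lawU N hN m hm]
      rw [ENNReal.toReal_mul, ENNReal.toReal_mul, ENNReal.toReal_ofReal hα0,
        ENNReal.toReal_ofReal hp0, ENNReal.toReal_inv, ENNReal.toReal_natCast]
    have q2 : (ℙ (W.γ N ⁻¹' {1} ∩ (W.ρ N ⁻¹' {-1} ∩ W.U N ⁻¹' {m}))).toReal
        = α * (1-p) * (N:ℝ)⁻¹ := by
      rw [← Set.inter_assoc, meas_piece W (-1), W.lawγ1 N hN, W.lawρm1 N hN, W.lawU N hN m hm]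
      rw [ENNReal.toReal_mul, ENNReal.toReal_mul, ENNReal.toReal_ofReal hα0,
        ENNReal.toReal_ofReal (by linarith), ENNReal.toReal_inv, ENNReal.toReal_natCast]
    rw [q1, q2]
    ring
  rw [Finset.sum_congr rfl hterm, Finset.sum_const, Nat.card_Icc]
  have hBint : (∫ ω, B.indicator (fun ω => ψ (W.ξ (N+1) ω)) ω)
      = (1 - α) * ∫ ω, ψ (W.ξ 1 ω) := by
    rw [hBdef, integral_indicator_xi W hN ψ hψmeas hintξ, W.lawγ0 N hN,
      ENNReal.toReal_ofReal (by linarith), hid.integral_eq]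
  rw [hBint]
  have hNne : (N:ℝ) ≠ 0 := by positivity
  rw [nsmul_eq_mul]
  push_cast
  field_simp
  ring
end URWaux

theorem stmt0 {Ω : Type*} [MeasureSpace Ω] {p α : ℝ} (W : URW Ω p α)
    (ψ : ℝ → ℝ) (hψmeas : Measurable ψ) (hψeven : ∀ x : ℝ, ψ (-x) = ψ x)
    (hint : Integrable (fun ω => ψ (W.ξ 1 ω)) ℙ) :
    ∀ k : ℕ, 1 ≤ k → ∫ ω, ψ (W.X k ω) = ∫ ω, ψ (W.ξ 1 ω) := by
  suffices h : ∀ k : ℕ, 1 ≤ k → Integrable (fun ω => ψ (W.X k ω)) ℙ ∧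
      ∫ ω, ψ (W.X k ω) = ∫ ω, ψ (W.ξ 1 ω) by
    intro k hk; exact (h k hk).2
  intro k
  induction k using Nat.strong_induction_on with
  | _ k IHs =>
    intro hk
    match k, hk with
    | 1, _ =>
      have h1 : (fun ω => ψ (W.X 1 ω)) = fun ω => ψ (W.ξ 1 ω) := by
        funext ω; rw [W.hX1]
      exact ⟨h1 ▸ hint, by rw [h1]⟩
    | (N+2), _ =>
      exact URWaux.step W ψ hψmeas hψeven hint (by omega : 1 ≤ N+1)
        (fun m hm1 hm2 => IHs m (by omega) hm1)
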